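/- Let T be an aperiodic homeomorphism of a Cantor set Ω. Then there exists a sequence (Pₙ) of homeomorphisms of Ω such that: each Pₙ has finite order (there is an integer N ≥ 1 with Pₙ^N = identity); each Pₙ belongs to the topological full group [[T]], i.e. there is a continuous function mₙ : Ω → ℤ with Pₙ x = T^{mₙ(x)} x for all x; and Pₙ converges to T in the uniform topology in the pointwise-eventual sense: for every x ∈ Ω there exists N ∈ ℕ such that Pₙ x = T x for all n ≥ N. -/

import Mathlib

open Classical
set_option linter.unusedSectionVars false
set_option maxHeartbeats 1000000

namespace Stmt15Aux


variable {Ω : Type*} [TopologicalSpace Ω] [CompactSpace Ω]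
  [TopologicalSpace.MetrizableSpace Ω] [TotallyDisconnectedSpace Ω]

/-- The ℤ-action of the homeomorphism `T`. -/
noncomputable def G (T : Ω ≃ₜ Ω) (i : ℤ) : Ω → Ω := fun x => (T.toEquiv ^ i) x

variable (T : Ω ≃ₜ Ω)

lemma G_add (i j : ℤ) (x : Ω) : G T (i + j) x = G T i (G T j x) := by
  simp [G, zpow_add, Equiv.Perm.mul_apply]

lemma G_zero (x : Ω) : G T 0 x = x := by simp [G]

lemma G_one (x : Ω) : G T 1 x = T x := by simp [G]

lemma G_neg_one (x : Ω) : G T (-1) x = T.symm x := by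
  simp only [G, zpow_neg_one]
  rfl

lemma G_inj {i : ℤ} {x y : Ω} (h : G T i x = G T i y) : x = y := by
  simpa [G] using (T.toEquiv ^ i).injective h

lemma G_cancel (i : ℤ) (x : Ω) : G T i (G T (-i) x) = x := by
  rw [← G_add]; simp [G_zero]

lemma G_cancel₂ (i : ℤ) (x : Ω) : G T (-i) (G T i x) = x := by
  rw [← G_add]; simp [G_zero]

lemma continuous_G (i : ℤ) : Continuous (G T i) := by
  induction i using Int.induction_on with
  | zero => rw [show G T 0 = id from funext (G_zero T)]; exact continuous_id
  | succ n ih =>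
      have h : G T ((n : ℤ) + 1) = fun x => G T 1 (G T n x) := by
        funext x; rw [add_comm, G_add]
      rw [h]
      simp only [G_one]
      exact T.continuous.comp ih
  | pred n ih =>
      have h : G T (-(n : ℤ) - 1) = fun x => G T (-1) (G T (-n) x) := by
        funext x; rw [show (-(n:ℤ) - 1) = -1 + -(n:ℤ) by ring, G_add]
      rw [h]
      simp only [G_neg_one]
      exact T.symm.continuous.comp ih

lemma G_iterate (n : ℕ) (x : Ω) : G T n x = (⇑T)^[n] x := by
  induction n with
  | zero => simp [G_zero]
  | succ k ih =>
      rw [Function.iterate_succ_apply', ← ih, show ((k+1:ℕ) : ℤ) = 1 + (k:ℤ) by push_cast; ring,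
        G_add, G_one]

/-- Aperiodicity in ℤ form. -/
lemma G_ne (hT : ∀ x : Ω, ∀ n : ℕ, 1 ≤ n → (⇑T)^[n] x ≠ x) {i : ℤ} (hi : i ≠ 0) (x : Ω) :
    G T i x ≠ x := by
  rcases lt_trichotomy i 0 with h | h | h
  · intro he
    have : G T (-i) x = x := by
      conv_lhs => rw [← he]
      rw [← G_add]; simp [G_zero]
    obtain ⟨n, hn⟩ : ∃ n : ℕ, -i = (n : ℤ) := ⟨(-i).toNat, by omega⟩
    rw [hn, G_iterate] at this
    exact hT x n (by omega) this
  · exact absurd h hi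
  · intro he
    obtain ⟨n, hn⟩ : ∃ n : ℕ, i = (n : ℤ) := ⟨i.toNat, by omega⟩
    rw [hn, G_iterate] at he
    exact hT x n (by omega) he

lemma isClopen_G_preimage {M : Set Ω} (hM : IsClopen M) (i : ℤ) :
    IsClopen (G T i ⁻¹' M) := hM.preimage (continuous_G T i)



/-- Least-witness function for a family of predicates. -/
noncomputable def findF (Q : ℕ → Ω → Prop) (hex : ∀ x, ∃ t, Q t x) (x : Ω) : ℕ :=
  Nat.find (hex x)

lemma findF_spec (Q : ℕ → Ω → Prop) (hex : ∀ x, ∃ t, Q t x) (x : Ω) :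
    Q (findF Q hex x) x := Nat.find_spec (hex x)

lemma findF_min (Q : ℕ → Ω → Prop) (hex : ∀ x, ∃ t, Q t x) (x : Ω) {t : ℕ}
    (ht : t < findF Q hex x) : ¬ Q t x := Nat.find_min (hex x) ht

lemma findF_le (Q : ℕ → Ω → Prop) (hex : ∀ x, ∃ t, Q t x) {x : Ω} {t : ℕ} (h : Q t x) :
    findF Q hex x ≤ t := Nat.find_le h

lemma findF_eq_iff (Q : ℕ → Ω → Prop) (hex : ∀ x, ∃ t, Q t x) (x : Ω) (k : ℕ) :
    findF Q hex x = k ↔ Q k x ∧ ∀ t < k, ¬ Q t x := Nat.find_eq_iff (hex x)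

lemma isClopen_findF_eq (Q : ℕ → Ω → Prop) (hex : ∀ x, ∃ t, Q t x)
    (hQ : ∀ t, IsClopen {x | Q t x}) (k : ℕ) :
    IsClopen {x | findF Q hex x = k} := by
  have hset : {x | findF Q hex x = k}
      = {x | Q k x} ∩ ⋂ t ∈ Finset.range k, {x | Q t x}ᶜ := by
    ext x
    simp only [Set.mem_setOf_eq, Set.mem_inter_iff, Set.mem_iInter, Set.mem_compl_iff,
      Finset.mem_range, findF_eq_iff]

  rw [hset]
  exact (hQ k).inter (isClopen_biInter_finset fun t _ => (hQ t).compl)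



lemma exists_nbhd (hT' : ∀ {i : ℤ}, i ≠ 0 → ∀ y : Ω, G T i y ≠ y) (h : ℕ) (x : Ω) :
    ∃ U : Set Ω, IsClopen U ∧ x ∈ U ∧
      ∀ i : ℤ, 1 ≤ i → i ≤ (h:ℤ) → ∀ u ∈ U, G T i u ∉ U := by
  have tots : TotallySeparatedSpace Ω := loc_compact_t2_tot_disc_iff_tot_sep.mp ‹_›
  have step : ∀ i : ℤ, ∃ V : Set Ω, IsClopen V ∧ x ∈ V ∧
      (1 ≤ i → i ≤ (h:ℤ) → ∀ u ∈ V, G T i u ∉ V) := by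
    intro i
    by_cases hi : 1 ≤ i ∧ i ≤ (h:ℤ)
    · have hne : x ≠ G T i x := (hT' (by omega) x).symm
      obtain ⟨W, hW, hxW, hW2⟩ := exists_isClopen_of_totally_separated hne
      refine ⟨W ∩ (G T i) ⁻¹' Wᶜ, hW.inter ((hW.compl).preimage (continuous_G T i)),
        ⟨hxW, hW2⟩, fun _ _ u hu => ?_⟩
      intro hmem
      exact hu.2 hmem.1
    · exact ⟨Set.univ, isClopen_univ, trivial, fun h1 h2 => absurd ⟨h1, h2⟩ hi⟩
  choose V hV hxV hVd using step
  refine ⟨⋂ i ∈ Finset.Icc (1:ℤ) (h:ℤ), V i, isClopen_biInter_finset fun i _ => hV i,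
    Set.mem_biInter fun i _ => hxV i, ?_⟩
  intro i h1 h2 u hu hmem
  have hi : i ∈ Finset.Icc (1:ℤ) (h:ℤ) := Finset.mem_Icc.mpr ⟨h1, h2⟩
  exact hVd i h1 h2 u (Set.mem_iInter₂.mp hu i hi)
    (Set.mem_iInter₂.mp hmem i hi)

lemma marker (hT' : ∀ {i : ℤ}, i ≠ 0 → ∀ y : Ω, G T i y ≠ y) (h : ℕ) :
    ∃ M : Set Ω, IsClopen M ∧
      (∀ x ∈ M, ∀ i : ℤ, 1 ≤ i → i ≤ (h:ℤ) → G T i x ∉ M) ∧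
      (∀ x : Ω, ∃ s : ℕ, s ≤ 2*h ∧ G T s x ∈ M) ∧
      (∀ x : Ω, ∃ s : ℕ, s ≤ 2*h ∧ G T (-(s:ℤ)) x ∈ M) := by
  choose U hUc hxU hUd using exists_nbhd T hT' h
  obtain ⟨t, ht⟩ := isCompact_univ.elim_finite_subcover U (fun x => (hUc x).2)
    (fun x _ => Set.mem_iUnion.mpr ⟨x, hxU x⟩)
  set l := t.toList with hl
  set V : ℕ → Set Ω := fun j => if hj : j < l.length then U (l.get ⟨j, hj⟩) else ∅ with hVdef
  have hVc : ∀ j, IsClopen (V j) := by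
    intro j; rw [hVdef]; dsimp only
    split
    · exact hUc _
    · exact isClopen_empty
  have hVd' : ∀ j, ∀ i : ℤ, 1 ≤ i → i ≤ (h:ℤ) → ∀ u ∈ V j, G T i u ∉ V j := by
    intro j i h1 h2 u hu
    by_cases hj : j < l.length
    · rw [hVdef] at hu ⊢; dsimp only at hu ⊢; rw [dif_pos hj] at hu ⊢
      exact hUd _ i h1 h2 u hu
    · rw [hVdef] at hu; dsimp only at hu; rw [dif_neg hj] at hu
      exact absurd hu (Set.notMem_empty u)
  have hVcov : ∀ x : Ω, ∃ j < l.length, x ∈ V j := by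
    intro x
    have := ht (Set.mem_univ x)
    rw [Set.mem_iUnion₂] at this
    obtain ⟨y, hy, hxy⟩ := this
    obtain ⟨j, hj⟩ := List.mem_iff_get.mp (Finset.mem_toList.mpr hy)
    exact ⟨j, j.isLt, by rw [hVdef]; dsimp only; rw [dif_pos j.isLt]; rw [hj]; exact hxy⟩
  -- greedy construction
  set bad : Set Ω → Set Ω :=
    fun A => ⋃ i ∈ Finset.Icc (-(h:ℤ)) (h:ℤ), (G T i) ⁻¹' A with hbad
  have hbadc : ∀ A, IsClopen A → IsClopen (bad A) := by
    intro A hA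
    exact isClopen_biUnion_finset fun i _ => hA.preimage (continuous_G T i)
  set PU : ℕ → Set Ω := fun j => Nat.rec ∅ (fun j Pj => Pj ∪ (V j \ bad Pj)) j with hPU
  have hPUsucc : ∀ j, PU (j+1) = PU j ∪ (V j \ bad (PU j)) := fun j => rfl
  have hPUzero : PU 0 = ∅ := rfl
  have hPUc : ∀ j, IsClopen (PU j) := by
    intro j; induction j with
    | zero => exact isClopen_empty
    | succ j ih => rw [hPUsucc]; exact ih.union ((hVc j).diff (hbadc _ ih))
  have hPUmono : ∀ j j', j ≤ j' → PU j ⊆ PU j' := by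
    intro j j' hle
    induction j' with
    | zero => rw [Nat.le_zero.mp hle]
    | succ j' ih =>
        rcases Nat.lt_or_ge j (j'+1) with hlt | hge
        · exact (ih (by omega)).trans (by rw [hPUsucc]; exact Set.subset_union_left)
        · rw [show j = j' + 1 by omega]
  -- key disjointness
  have hdisj : ∀ j, ∀ x ∈ PU j, ∀ i : ℤ, i ≠ 0 → |i| ≤ (h:ℤ) → G T i x ∉ PU j := by
    intro j
    induction j with
    | zero => intro x hx; exact absurd hx (Set.notMem_empty x)
    | succ j ih =>
        intro x hx i hi0 hih hmem
        rw [hPUsucc] at hx hmem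
        have habs : ∀ z : Ω, z ∈ V j \ bad (PU j) → ∀ i' : ℤ, |i'| ≤ (h:ℤ) →
            G T i' z ∈ PU j → False := by
          intro z hz i' hi' hz'
          exact hz.2 (Set.mem_biUnion (Finset.mem_Icc.mpr (abs_le.mp hi')) hz')
        rcases hx with hx | hx <;> rcases hmem with hmem | hmem
        · exact ih x hx i hi0 hih hmem
        · -- G i x ∈ new part, x ∈ PU j : then G i x excluded since G (-i) (G i x) = x ∈ PU j
          refine habs _ hmem (-i) (by rwa [abs_neg]) ?_
          rw [← G_add]; simpa [G_zero] using hx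
        · exact habs _ hx i hih hmem
        · -- both in V j
          rcases lt_trichotomy i 0 with hneg | h0 | hpos
          · refine hVd' j (-i) (by omega) (by rw [abs_le] at hih; omega) (G T i x) hmem.1 ?_
            rw [← G_add]; simpa [G_zero] using hx.1
          · exact hi0 h0
          · exact hVd' j i hpos (by rwa [abs_of_pos hpos] at hih) x hx.1 hmem.1
  have hcov : ∀ j, ∀ x : Ω, (∃ l' < j, x ∈ V l') →
      ∃ i : ℤ, |i| ≤ (h:ℤ) ∧ G T i x ∈ PU j := by
    intro j
    induction j with
    | zero => rintro x ⟨l', hl', _⟩; omega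
    | succ j ih =>
        rintro x ⟨l', hl', hx⟩
        rcases Nat.lt_or_ge l' j with hlt | hge
        · obtain ⟨i, hi, hmem⟩ := ih x ⟨l', hlt, hx⟩
          exact ⟨i, hi, hPUmono j (j+1) (by omega) hmem⟩
        · rw [show l' = j by omega] at hx
          by_cases hb : x ∈ bad (PU j)
          · rw [hbad] at hb
            obtain ⟨i, hi, hmem⟩ := Set.mem_iUnion₂.mp hb
            exact ⟨i, abs_le.mpr (Finset.mem_Icc.mp hi), hPUmono j (j+1) (by omega) hmem⟩
          · exact ⟨0, by simp, by rw [G_zero, hPUsucc]; exact Or.inr ⟨hx, hb⟩⟩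
  refine ⟨PU l.length, hPUc _, ?_, ?_, ?_⟩
  · intro x hx i h1 h2
    exact hdisj _ x hx i (by omega) (by rw [abs_of_pos (by omega)]; omega)
  · intro x
    obtain ⟨j, hj, hx⟩ := hVcov (G T h x)
    obtain ⟨i, hi, hmem⟩ := hcov l.length (G T h x) ⟨j, hj, hx⟩
    rw [← G_add] at hmem
    refine ⟨(i + h).toNat, by rw [abs_le] at hi; omega, ?_⟩
    rwa [show ((i + (h:ℤ)).toNat : ℤ) = i + h by rw [abs_le] at hi; omega]
  · intro x
    obtain ⟨j, hj, hx⟩ := hVcov (G T (-(h:ℤ)) x)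
    obtain ⟨i, hi, hmem⟩ := hcov l.length (G T (-(h:ℤ)) x) ⟨j, hj, hx⟩
    rw [← G_add] at hmem
    refine ⟨(-(i - h)).toNat, by rw [abs_le] at hi; omega, ?_⟩
    rwa [show -((-(i - (h:ℤ))).toNat : ℤ) = i + -(h:ℤ) by rw [abs_le] at hi; omega]

lemma sumdiv (k : ℕ) : ∀ N : ℕ, (Finset.Icc 1 k).sum (fun m => N / 32^m) ≤ N / 31 := by
  induction k with
  | zero => intro N; simp
  | succ k ih =>
      intro N
      have hre : (Finset.Icc 1 (k+1)).sum (fun m => N / 32^m)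
          = (Finset.Icc 0 k).sum (fun m => N / 32^(m+1)) := by
        rw [show Finset.Icc 1 (k+1) = (Finset.Icc 0 k).map
          (addRightEmbedding 1) by rw [Finset.map_add_right_Icc], Finset.sum_map]
        rfl
      have hterm : ∀ m : ℕ, N / 32^(m+1) = (N/32) / 32^m := by
        intro m
        rw [Nat.div_div_eq_div_mul, pow_succ']
      rw [hre]
      have h0 : (Finset.Icc 0 k).sum (fun m => N / 32^(m+1))
          = N/32 + (Finset.Icc 1 k).sum (fun m => (N/32) / 32^m) := by
        rw [show Finset.Icc 0 k = insert 0 (Finset.Icc 1 k) by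
          ext m; simp [Finset.mem_Icc, Finset.mem_insert]; omega]
        rw [Finset.sum_insert (by simp)]
        simp only [hterm, pow_zero, Nat.div_one]
      rw [h0]
      have h1 : (Finset.Icc 1 k).sum (fun m => (N/32) / 32^m) ≤ (N/32) / 31 := ih (N/32)
      have h2 : N/32 + (N/32)/31 ≤ N/31 := by
        set A := N/32 with hA
        have h32 : 32 * A ≤ N := by
          rw [hA, mul_comm]; exact Nat.div_mul_le_self N 32
        calc A + A/31 = (A + 31*A)/31 := by
              rw [Nat.add_mul_div_left _ _ (by norm_num : 0 < 31)]; omega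
          _ ≤ N/31 := Nat.div_le_div_right (by omega)
      omega

/-- The set of forward hitting times of `A` below `L`, as a Finset. -/
noncomputable def hits (A : Set Ω) (x : Ω) (L : ℕ) : Finset ℕ :=
  (Finset.range L).filter (fun t : ℕ => G T t x ∈ A)

lemma mem_hits {A : Set Ω} {x : Ω} {L t : ℕ} :
    t ∈ hits T A x L ↔ t < L ∧ G T t x ∈ A := by
  simp [hits]

lemma card_sep {S : Set Ω} {q₀ : ℕ} (hq : 1 ≤ q₀)
    (hsep : ∀ x ∈ S, ∀ i : ℕ, 1 ≤ i → i < q₀ → G T i x ∉ S) (x : Ω) (L : ℕ) :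
    (hits T S x L).card ≤ L / q₀ + 1 := by
  have hsepd : ∀ t ∈ hits T S x L, ∀ t' ∈ hits T S x L, t < t' → t + q₀ ≤ t' := by
    intro t ht t' ht' hlt
    rw [mem_hits] at ht ht'
    by_contra hcon
    refine hsep (G T t x) ht.2 (t' - t) (by omega) (by omega) ?_
    rw [← G_add, show ((t' - t : ℕ) : ℤ) + (t:ℤ) = ((t' : ℕ) : ℤ) by omega]
    exact ht'.2
  have : (hits T S x L).card ≤ (Finset.range (L / q₀ + 1)).card := by
    apply Finset.card_le_card_of_injOn (fun t => t / q₀)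
    · intro t ht
      rw [Finset.coe_range, Set.mem_Iio]; show t / q₀ < L / q₀ + 1
      rw [Finset.mem_coe, mem_hits] at ht
      have := Nat.div_le_div_right (c := q₀) (Nat.le_of_lt ht.1)
      omega
    · intro t ht t' ht' heq
      simp only at heq
      by_contra hne
      rcases Nat.lt_or_ge t t' with hlt | hge
      · have := hsepd t ht t' ht' hlt
        have : t / q₀ + 1 ≤ t' / q₀ := by
          calc t / q₀ + 1 = (t + q₀) / q₀ := by rw [Nat.add_div_right _ (by omega)]
            _ ≤ t' / q₀ := Nat.div_le_div_right this
        omega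
      · have hlt : t' < t := by omega
        have := hsepd t' ht' t ht hlt
        have : t' / q₀ + 1 ≤ t / q₀ := by
          calc t' / q₀ + 1 = (t' + q₀) / q₀ := by rw [Nat.add_div_right _ (by omega)]
            _ ≤ t / q₀ := Nat.div_le_div_right this
        omega
  simpa using this

/-- Density invariant. -/
def Density (n : ℕ) (F : Set Ω) : Prop :=
  ∀ (x : Ω) (L : ℕ),
    (hits T F x L).card ≤ (Finset.Icc 1 n).sum (fun m => L / 32^m) + n

lemma density_zero : Density T 0 (∅ : Set Ω) := by
  intro x L
  simp [hits]

lemma density_union {n : ℕ} {F S : Set Ω} (hF : Density T n F)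
    (hsep : ∀ x ∈ S, ∀ i : ℕ, 1 ≤ i → i < 32^(n+1) → G T i x ∉ S) :
    Density T (n+1) (F ∪ S) := by
  intro x L
  have hsub : hits T (F ∪ S) x L ⊆ hits T F x L ∪ hits T S x L := by
    intro t ht
    rw [mem_hits] at ht
    rcases ht.2 with hF' | hS'
    · exact Finset.mem_union_left _ (mem_hits T |>.mpr ⟨ht.1, hF'⟩)
    · exact Finset.mem_union_right _ (mem_hits T |>.mpr ⟨ht.1, hS'⟩)
  have hsplit : (hits T (F ∪ S) x L).card
      ≤ (hits T F x L).card + (hits T S x L).card :=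
    (Finset.card_le_card hsub).trans (Finset.card_union_le _ _)
  have h1 := hF x L
  have h2 := card_sep T (q₀ := 32^(n+1)) (Nat.one_le_pow _ _ (by norm_num)) hsep x L
  have hsum : (Finset.Icc 1 (n+1)).sum (fun m => L / 32^m)
      = (Finset.Icc 1 n).sum (fun m => L / 32^m) + L / 32^(n+1) := by
    rw [Finset.sum_Icc_succ_top (by omega)]
  omega

/-- Key counting estimate used to choose seams. -/
lemma density_le {n : ℕ} {F : Set Ω} (hF : Density T n F) (x : Ω) (L : ℕ) :
    (hits T F x L).card ≤ L / 31 + n :=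
  (hF x L).trans (by have := sumdiv n L; omega)


/-- Separation property: points of `S` along an orbit are at distance `≥ q₀`. -/
def Sep (q₀ : ℕ) (S : Set Ω) : Prop :=
  ∀ x ∈ S, ∀ i : ℕ, 1 ≤ i → i < q₀ → G T i x ∉ S

def HitF (B : ℕ) (S : Set Ω) : Prop := ∀ x : Ω, ∃ t : ℕ, t ≤ B ∧ G T t x ∈ S

def HitB (B : ℕ) (S : Set Ω) : Prop := ∀ x : Ω, ∃ t : ℕ, t ≤ B ∧ G T (-(t:ℤ)) x ∈ S

lemma stage (hT' : ∀ {i : ℤ}, i ≠ 0 → ∀ y : Ω, G T i y ≠ y) (n : ℕ) (F : Set Ω)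
    (hFc : IsClopen F) (hFd : Density T n F) :
    ∃ S : Set Ω, IsClopen S ∧ (∀ x ∈ S, x ∉ F) ∧ Sep T (32^(n+1)) S ∧
      HitF T (17 * 32^(n+1)) S ∧ HitB T (17 * 32^(n+1)) S ∧ Density T (n+1) (F ∪ S) := by
  set q := 32^(n+1) with hqdef
  have hq1 : 32 ≤ q := by
    rw [hqdef]
    calc (32:ℕ) = 32^1 := by norm_num
      _ ≤ 32^(n+1) := Nat.pow_le_pow_right (by norm_num) (by omega)
  have hnq : n ≤ q := by
    have h1 : n < 32^n := Nat.lt_pow_self (n := n) (by norm_num)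
    have h2 : (32:ℕ)^n ≤ 32^(n+1) := Nat.pow_le_pow_right (by norm_num) (by omega)
    omega
  obtain ⟨M, hM, hMd, hMf, hMb⟩ := marker T hT' (4*q)
  -- position from the previous marker
  have hexa : ∀ x : Ω, ∃ s : ℕ, G T (-(s:ℤ)) x ∈ M := fun x => (hMb x).imp fun s hs => hs.2
  set a := findF (fun s x => G T (-(s:ℤ)) x ∈ M) hexa with ha
  have haM : ∀ x, G T (-(a x : ℤ)) x ∈ M := fun x => findF_spec _ hexa x
  have haLe : ∀ x, a x ≤ 8*q := by
    intro x; obtain ⟨s, hs, hsM⟩ := hMb x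
    exact (findF_le _ hexa hsM).trans (by omega)
  -- next marker time
  have hexg : ∀ x : Ω, ∃ t : ℕ, 1 ≤ t ∧ G T t x ∈ M := by
    intro x
    obtain ⟨s, hs, hsM⟩ := hMf (G T 1 x)
    refine ⟨s+1, by omega, ?_⟩
    rw [show ((s+1:ℕ):ℤ) = (s:ℤ) + 1 by omega, G_add]; exact hsM
  set g := findF (fun t x => 1 ≤ t ∧ G T t x ∈ M) hexg with hg
  have hgM : ∀ x, G T (g x) x ∈ M := fun x => (findF_spec _ hexg x).2
  have hg1 : ∀ x, 1 ≤ g x := fun x => (findF_spec _ hexg x).1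
  have hgLe : ∀ x, g x ≤ 8*q+1 := by
    intro x
    obtain ⟨s, hs, hsM⟩ := hMf (G T 1 x)
    have hmem : 1 ≤ s + 1 ∧ G T ((s+1 : ℕ)) x ∈ M := by
      refine ⟨by omega, ?_⟩
      rw [show ((s+1:ℕ):ℤ) = (s:ℤ)+1 by omega, G_add]; exact hsM
    exact (findF_le _ hexg hmem).trans (by omega)
  have hgMin : ∀ x, ∀ t, 1 ≤ t → t < g x → G T t x ∉ M := by
    intro x t h1 h2 hmem
    exact findF_min _ hexg x h2 ⟨h1, hmem⟩
  have hglb : ∀ y ∈ M, 4*q < g y := by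
    intro y hy
    by_contra hcon
    exact hMd y hy (g y) (by exact_mod_cast hg1 y) (by push_cast; omega) (hgM y)
  -- position within the column
  have hlevel : ∀ y ∈ M, ∀ j : ℕ, j < g y → a (G T j y) = j := by
    intro y hy j hj
    rw [ha, findF_eq_iff]
    constructor
    · show G T (-(j:ℤ)) (G T j y) ∈ M
      rw [G_cancel₂]; exact hy
    · intro s hs hmem
      have hmem' : G T ((j - s : ℕ)) y ∈ M := by
        rw [show ((j - s:ℕ):ℤ) = -(s:ℤ) + (j:ℤ) by omega, G_add]; exact hmem
      exact hgMin y (j - s) (by omega) (by omega) hmem'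
  -- selection of the seam position
  have hexσ : ∀ y : Ω, ∃ j : ℕ,
      (y ∈ M → q ≤ j ∧ j + q ≤ g y ∧ G T j y ∉ F) ∧ (y ∉ M → j = 0) := by
    intro y
    by_cases hy : y ∈ M
    · have hgy := hglb y hy
      set J := Finset.Icc q (g y - q) with hJ
      have hJcard : 2*q + 2 ≤ J.card := by rw [hJ, Nat.card_Icc]; omega
      have hbad : (J.filter (fun j : ℕ => G T j y ∈ F)).card ≤ q + n := by
        have hsub : J.filter (fun j : ℕ => G T j y ∈ F) ⊆ hits T F y (g y - q + 1) := by
          intro j hj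
          rw [Finset.mem_filter, hJ, Finset.mem_Icc] at hj
          exact (mem_hits T).mpr ⟨by omega, hj.2⟩
        have h1 := (Finset.card_le_card hsub).trans (density_le T hFd y (g y - q + 1))
        have h2 : (g y - q + 1) / 31 ≤ q := by
          have h3 : g y - q + 1 ≤ 7*q + 2 := by have := hgLe y; omega
          have h4 := Nat.div_le_div_right (c := 31) h3
          have h5 : (7*q+2)/31 ≤ (31*q)/31 := Nat.div_le_div_right (by omega)
          rw [Nat.mul_div_cancel_left q (by norm_num)] at h5
          omega
        omega
      have hgood : (J.filter (fun j : ℕ => G T j y ∉ F)).Nonempty := by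
        by_contra hcon
        rw [Finset.not_nonempty_iff_eq_empty, Finset.filter_eq_empty_iff] at hcon
        have hall : J.filter (fun j : ℕ => G T j y ∈ F) = J :=
          Finset.filter_eq_self.mpr (fun j hj => not_not.mp (hcon hj))
        rw [hall] at hbad
        omega
      obtain ⟨j, hj⟩ := hgood
      rw [Finset.mem_filter, hJ, Finset.mem_Icc] at hj
      exact ⟨j, fun _ => ⟨hj.1.1, by omega, hj.2⟩, fun h => absurd hy h⟩
    · exact ⟨0, fun h => absurd h hy, fun _ => rfl⟩
  set σ := findF _ hexσ with hσ
  have hσspec : ∀ y ∈ M, q ≤ σ y ∧ σ y + q ≤ g y ∧ G T (σ y) y ∉ F :=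
    fun y hy => (findF_spec _ hexσ y).1 hy
  -- the seam
  set S : Set Ω := ⋃ k ∈ Finset.range (8*q+1),
      ({x | a x = k} ∩ (G T (-(k:ℤ))) ⁻¹' {y | σ y = k}) with hS
  have hmemS : ∀ x : Ω, x ∈ S ↔ a x = σ (G T (-(a x : ℤ)) x) := by
    intro x
    rw [hS]
    simp only [Set.mem_iUnion, Set.mem_inter_iff, Set.mem_setOf_eq, Set.mem_preimage,
      Finset.mem_range, exists_prop]
    constructor
    · rintro ⟨k, hk, h1, h2⟩
      rw [h1]
      exact h2.symm
    · intro h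
      exact ⟨a x, by have := haLe x; omega, rfl, h.symm⟩
  -- clopenness
  have haclopen : ∀ k, IsClopen {x : Ω | a x = k} := by
    intro k
    refine isClopen_findF_eq _ hexa (fun s => ?_) k
    show IsClopen ((G T (-(s:ℤ))) ⁻¹' M)
    exact hM.preimage (continuous_G T _)
  have hgclopen : ∀ k, IsClopen {x : Ω | g x = k} := by
    intro k
    refine isClopen_findF_eq _ hexg (fun t => ?_) k
    by_cases ht : 1 ≤ t
    · have hset : {x : Ω | 1 ≤ t ∧ G T t x ∈ M} = (G T t) ⁻¹' M := by
        ext x; simp [ht]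
      rw [hset]; exact hM.preimage (continuous_G T _)
    · have hset : {x : Ω | 1 ≤ t ∧ G T t x ∈ M} = ∅ := by
        ext x; simp [ht]
      rw [hset]; exact isClopen_empty
  have hgele : ∀ c : ℕ, IsClopen {y : Ω | c ≤ g y} := by
    intro c
    have hset : {y : Ω | c ≤ g y} = (⋃ t ∈ Finset.range c, {y : Ω | g y = t})ᶜ := by
      ext y
      simp only [Set.mem_setOf_eq, Set.mem_compl_iff, Set.mem_iUnion, Finset.mem_range,
        exists_prop, not_exists, not_and]
      constructor
      · intro h t ht heq; omega
      · intro h; by_contra hc; exact h (g y) (by omega) rfl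
    rw [hset]
    exact (isClopen_biUnion_finset fun t _ => hgclopen t).compl
  have hσclopen : ∀ k, IsClopen {y : Ω | σ y = k} := by
    intro k
    refine isClopen_findF_eq _ hexσ (fun j => ?_) k
    rcases Nat.lt_or_ge j q with hlt | hge
    · by_cases hj0 : j = 0
      · have hset : {y : Ω | (y ∈ M → q ≤ j ∧ j + q ≤ g y ∧ G T j y ∉ F) ∧ (y ∉ M → j = 0)}
            = Mᶜ := by
          ext y
          simp only [Set.mem_setOf_eq, Set.mem_compl_iff]
          constructor
          · intro h hy
            exact absurd (h.1 hy).1 (by omega)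
          · intro h
            exact ⟨fun hy => absurd hy h, fun _ => hj0⟩
        rw [hset]; exact hM.compl
      · have hset : {y : Ω | (y ∈ M → q ≤ j ∧ j + q ≤ g y ∧ G T j y ∉ F) ∧ (y ∉ M → j = 0)}
            = ∅ := by
          ext y
          simp only [Set.mem_setOf_eq, Set.mem_empty_iff_false, iff_false, not_and]
          intro h1 h2
          by_cases hy : y ∈ M
          · exact absurd (h1 hy).1 (by omega)
          · exact hj0 (h2 hy)
        rw [hset]; exact isClopen_empty
    · have hj0 : j ≠ 0 := by omega
      have hset : {y : Ω | (y ∈ M → q ≤ j ∧ j + q ≤ g y ∧ G T j y ∉ F) ∧ (y ∉ M → j = 0)}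
          = M ∩ ({y : Ω | j + q ≤ g y} ∩ (G T j) ⁻¹' Fᶜ) := by
        ext y
        simp only [Set.mem_setOf_eq, Set.mem_inter_iff, Set.mem_preimage, Set.mem_compl_iff]
        constructor
        · intro h
          by_cases hy : y ∈ M
          · exact ⟨hy, (h.1 hy).2.1, (h.1 hy).2.2⟩
          · exact absurd (h.2 hy) hj0
        · rintro ⟨hy, h1, h2⟩
          exact ⟨fun _ => ⟨hge, h1, h2⟩, fun h => absurd hy h⟩
      rw [hset]
      exact hM.inter ((hgele (j+q)).inter ((hFc.compl).preimage (continuous_G T _)))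
  have hSclopen : IsClopen S := by
    rw [hS]
    exact isClopen_biUnion_finset fun k _ =>
      (haclopen k).inter ((hσclopen k).preimage (continuous_G T _))
  -- S avoids F
  have hSF : ∀ x ∈ S, x ∉ F := by
    intro x hx
    rw [hmemS] at hx
    have hyM := haM x
    have h3 := (hσspec _ hyM).2.2
    rw [← hx] at h3
    rwa [show G T ((a x : ℕ)) (G T (-(a x:ℤ)) x) = x from G_cancel T _ x] at h3
  -- separation
  have hSep : Sep T q S := by
    intro x hx i hi1 hiq hmem
    rw [hmemS] at hx hmem
    have hyM : G T (-(a x:ℤ)) x ∈ M := haM x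
    set y := G T (-(a x:ℤ)) x with hy
    obtain ⟨hs1, hs2, hs3⟩ := hσspec y hyM
    have hxy : x = G T ((a x : ℕ)) y := by rw [hy, G_cancel]
    have hGix : G T (i:ℕ) x = G T ((a x + i : ℕ)) y := by
      conv_lhs => rw [hxy]
      rw [← G_add]
      congr 1
      push_cast; ring
    have hj' : a x + i < g y := by omega
    rw [hGix, hlevel y hyM (a x + i) hj'] at hmem
    rw [G_cancel₂] at hmem
    omega
  -- forward hitting
  have hHitF : HitF T (17*q) S := by
    intro x
    have hy'M : G T (g x) x ∈ M := hgM x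
    set y' := G T (g x) x with hy'
    obtain ⟨hs1, hs2, hs3⟩ := hσspec y' hy'M
    refine ⟨g x + σ y', by have := hgLe x; have := hgLe y'; omega, ?_⟩
    rw [hmemS]
    have heq : G T ((g x + σ y' : ℕ)) x = G T ((σ y' : ℕ)) y' := by
      rw [hy', ← G_add]
      congr 1
      push_cast; ring
    rw [heq, hlevel y' hy'M (σ y') (by omega)]
    rw [G_cancel₂]
  -- backward hitting
  have hHitB : HitB T (17*q) S := by
    intro x
    obtain ⟨t, ht, hmem⟩ := hHitF (G T (-((17*q : ℕ):ℤ)) x)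
    rw [← G_add] at hmem
    refine ⟨17*q - t, by omega, ?_⟩
    rw [show (-(((17*q - t:ℕ)):ℤ)) = (t:ℤ) + -(((17*q:ℕ)):ℤ) by omega]
    exact hmem
  exact ⟨S, hSclopen, hSF, hSep, hHitF, hHitB, density_union T hFd hSep⟩

lemma periodic_from_section (S : Set Ω) (hS : IsClopen S) (B : ℕ) (hB : 1 ≤ B)
    (hHF : HitF T B S) (hHB : HitB T B S) :
    ∃ P : Ω ≃ₜ Ω, (∃ N : ℕ, 1 ≤ N ∧ ∀ x : Ω, (⇑P)^[N] x = x) ∧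
      (∃ m : Ω → ℤ, Continuous m ∧ ∀ x : Ω, P x = (T.toEquiv ^ (m x)) x) ∧
      (∀ x : Ω, T x ∉ S → P x = T x) := by
  -- time since the previous visit (at least 1)
  have hexb : ∀ y : Ω, ∃ t : ℕ, 1 ≤ t ∧ G T (-(t:ℤ)) y ∈ S := by
    intro y
    obtain ⟨s, hs, hsS⟩ := hHB (G T (-1) y)
    refine ⟨s+1, by omega, ?_⟩
    rw [show (-((s+1:ℕ):ℤ)) = -(s:ℤ) + -1 by omega, G_add]; exact hsS
  set b := findF (fun t y => 1 ≤ t ∧ G T (-(t:ℤ)) y ∈ S) hexb with hb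
  have hbS : ∀ y, G T (-(b y : ℤ)) y ∈ S := fun y => (findF_spec _ hexb y).2
  have hb1 : ∀ y, 1 ≤ b y := fun y => (findF_spec _ hexb y).1
  have hbLe : ∀ y, b y ≤ B + 1 := by
    intro y
    obtain ⟨s, hs, hsS⟩ := hHB (G T (-1) y)
    have hmem : 1 ≤ s+1 ∧ G T (-((s+1:ℕ):ℤ)) y ∈ S := by
      refine ⟨by omega, ?_⟩
      rw [show (-((s+1:ℕ):ℤ)) = -(s:ℤ) + -1 by omega, G_add]; exact hsS
    exact (findF_le _ hexb hmem).trans (by omega)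
  have hbMin : ∀ y, ∀ t, 1 ≤ t → t < b y → G T (-(t:ℤ)) y ∉ S := by
    intro y t h1 h2 hmem
    exact findF_min _ hexb y h2 ⟨h1, hmem⟩
  -- time to the next visit (at least 1)
  have hexg : ∀ x : Ω, ∃ t : ℕ, 1 ≤ t ∧ G T (t:ℤ) x ∈ S := by
    intro x
    obtain ⟨s, hs, hsS⟩ := hHF (G T 1 x)
    refine ⟨s+1, by omega, ?_⟩
    rw [show (((s+1:ℕ)):ℤ) = (s:ℤ) + 1 by omega, G_add]; exact hsS
  set gS := findF (fun t x => 1 ≤ t ∧ G T (t:ℤ) x ∈ S) hexg with hgS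
  have hgSS : ∀ x, G T (gS x : ℤ) x ∈ S := fun x => (findF_spec _ hexg x).2
  have hgS1 : ∀ x, 1 ≤ gS x := fun x => (findF_spec _ hexg x).1
  have hgSLe : ∀ x, gS x ≤ B + 1 := by
    intro x
    obtain ⟨s, hs, hsS⟩ := hHF (G T 1 x)
    have hmem : 1 ≤ s+1 ∧ G T (((s+1:ℕ)):ℤ) x ∈ S := by
      refine ⟨by omega, ?_⟩
      rw [show (((s+1:ℕ)):ℤ) = (s:ℤ) + 1 by omega, G_add]; exact hsS
    exact (findF_le _ hexg hmem).trans (by omega)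
  have hgSMin : ∀ x, ∀ t, 1 ≤ t → t < gS x → G T (t:ℤ) x ∉ S := by
    intro x t h1 h2 hmem
    exact findF_min _ hexg x h2 ⟨h1, hmem⟩
  -- the permutation
  set m : Ω → ℤ := fun x => if G T 1 x ∈ S then 1 - (b (G T 1 x) : ℤ) else 1 with hm
  set m' : Ω → ℤ := fun y => if y ∈ S then (gS y : ℤ) - 1 else -1 with hm'
  set P₀ : Ω → Ω := fun x => G T (m x) x with hP₀
  set Q₀ : Ω → Ω := fun y => G T (m' y) y with hQ₀
  -- two key identities
  have key1 : ∀ x : Ω, G T 1 x ∈ S → gS (G T (1 - (b (G T 1 x) : ℤ)) x) = b (G T 1 x) := by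
    intro x hx
    set y := G T 1 x with hy
    set w := G T (1 - (b y : ℤ)) x with hw
    have hwy : ∀ t : ℕ, G T (t:ℤ) w = G T ((t:ℤ) + 1 - (b y:ℤ)) x := by
      intro t
      rw [hw, ← G_add]; congr 1; ring
    rw [hgS, findF_eq_iff]
    constructor
    · refine ⟨hb1 y, ?_⟩
      rw [hwy]
      rw [show ((b y:ℤ) + 1 - (b y:ℤ)) = 1 by ring]
      exact hx
    · rintro t ht ⟨ht1, htS⟩
      rw [hwy] at htS
      have : G T (-(((b y - t:ℕ)):ℤ)) y ∈ S := by
        rw [hy, ← G_add]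
        rw [show (-(((b y - t:ℕ)):ℤ) + 1) = ((t:ℤ) + 1 - (b y:ℤ)) by omega]
        exact htS
      exact hbMin y (b y - t) (by omega) (by omega) this
  have key2 : ∀ y ∈ S, b (G T (gS y : ℤ) y) = gS y := by
    intro y hy
    rw [hb, findF_eq_iff]
    constructor
    · refine ⟨hgS1 y, ?_⟩
      rw [← G_add]
      rw [show (-((gS y:ℤ)) + (gS y:ℤ)) = 0 by ring, G_zero]
      exact hy
    · rintro t ht ⟨ht1, htS⟩
      have : G T (((gS y - t:ℕ)):ℤ) y ∈ S := by
        rw [show (((gS y - t:ℕ)):ℤ) = -(t:ℤ) + (gS y:ℤ) by omega, G_add]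
        exact htS
      exact hgSMin y (gS y - t) (by omega) (by omega) this
  -- inverse properties
  have hleft : ∀ x : Ω, Q₀ (P₀ x) = x := by
    intro x
    by_cases hx : G T 1 x ∈ S
    · have hPx : P₀ x = G T (1 - (b (G T 1 x) : ℤ)) x := by rw [hP₀]; simp only [hm, if_pos hx]
      have hPxS : P₀ x ∈ S := by
        rw [hPx, show (1 - (b (G T 1 x) : ℤ)) = -(b (G T 1 x):ℤ) + 1 by ring, G_add]
        exact hbS (G T 1 x)
      rw [hQ₀]; simp only [hm', if_pos hPxS]
      rw [hPx] at hPxS ⊢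
      rw [← hPx, hPx, key1 x hx] -- gS (w) = b y
      rw [← G_add]
      rw [show ((b (G T 1 x):ℤ) - 1 + (1 - (b (G T 1 x):ℤ))) = 0 by ring, G_zero]
    · have hPx : P₀ x = G T 1 x := by rw [hP₀]; simp only [hm, if_neg hx]
      rw [hQ₀, hPx]; simp only [hm', if_neg hx]
      rw [← G_add]; norm_num [G_zero]
  have hright : ∀ y : Ω, P₀ (Q₀ y) = y := by
    intro y
    by_cases hy : y ∈ S
    · have hQy : Q₀ y = G T ((gS y:ℤ) - 1) y := by rw [hQ₀]; simp only [hm', if_pos hy]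
      have h1 : G T 1 (Q₀ y) = G T (gS y : ℤ) y := by
        rw [hQy, ← G_add]; congr 1; ring
      have h1S : G T 1 (Q₀ y) ∈ S := by rw [h1]; exact hgSS y
      rw [hP₀]; simp only [hm, if_pos h1S]
      rw [h1, key2 y hy, hQy, ← G_add]
      rw [show (1 - (gS y:ℤ) + ((gS y:ℤ) - 1)) = 0 by ring, G_zero]
    · have hQy : Q₀ y = G T (-1) y := by rw [hQ₀]; simp only [hm', if_neg hy]
      have h1 : G T 1 (Q₀ y) = y := by rw [hQy, ← G_add]; norm_num [G_zero]
      have h1S : G T 1 (Q₀ y) ∉ S := by rw [h1]; exact hy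
      rw [hP₀]; simp only [hm, if_neg h1S]
      exact h1
  -- continuity
  have hbclopen : ∀ k, IsClopen {y : Ω | b y = k} := by
    intro k
    refine isClopen_findF_eq _ hexb (fun t => ?_) k
    by_cases ht : 1 ≤ t
    · have hset : {y : Ω | 1 ≤ t ∧ G T (-(t:ℤ)) y ∈ S} = (G T (-(t:ℤ))) ⁻¹' S := by
        ext y; simp [ht]
      rw [hset]; exact hS.preimage (continuous_G T _)
    · have hset : {y : Ω | 1 ≤ t ∧ G T (-(t:ℤ)) y ∈ S} = ∅ := by ext y; simp [ht]
      rw [hset]; exact isClopen_empty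
  have hgSclopen : ∀ k, IsClopen {x : Ω | gS x = k} := by
    intro k
    refine isClopen_findF_eq _ hexg (fun t => ?_) k
    by_cases ht : 1 ≤ t
    · have hset : {x : Ω | 1 ≤ t ∧ G T (t:ℤ) x ∈ S} = (G T (t:ℤ)) ⁻¹' S := by
        ext x; simp [ht]
      rw [hset]; exact hS.preimage (continuous_G T _)
    · have hset : {x : Ω | 1 ≤ t ∧ G T (t:ℤ) x ∈ S} = ∅ := by ext x; simp [ht]
      rw [hset]; exact isClopen_empty
  have hmclopen : ∀ c : ℤ, IsClopen {x : Ω | m x = c} := by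
    intro c
    have hbset : IsClopen {y : Ω | (1 - (b y : ℤ)) = c} := by
      by_cases hc : 0 ≤ 1 - c
      · have hset : {y : Ω | (1 - (b y : ℤ)) = c} = {y : Ω | b y = (1 - c).toNat} := by
          ext y; simp only [Set.mem_setOf_eq]; omega
        rw [hset]; exact hbclopen _
      · have hset : {y : Ω | (1 - (b y : ℤ)) = c} = ∅ := by
          ext y; simp only [Set.mem_setOf_eq, Set.mem_empty_iff_false, iff_false]; omega
        rw [hset]; exact isClopen_empty
    have hset : {x : Ω | m x = c}
        = ((G T 1) ⁻¹' Sᶜ ∩ (if c = 1 then Set.univ else ∅))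
          ∪ ((G T 1) ⁻¹' S ∩ (G T 1) ⁻¹' {y : Ω | (1 - (b y : ℤ)) = c}) := by
      ext x
      simp only [Set.mem_setOf_eq, Set.mem_union, Set.mem_inter_iff, Set.mem_preimage,
        Set.mem_compl_iff, hm]
      by_cases hx : G T 1 x ∈ S
      · simp [hx]
      · by_cases hc : c = 1 <;> simp [hx, hc] <;> omega
    rw [hset]
    refine IsClopen.union (IsClopen.inter (hS.compl.preimage (continuous_G T _)) ?_)
      (IsClopen.inter (hS.preimage (continuous_G T _)) (hbset.preimage (continuous_G T _)))
    split
    · exact isClopen_univ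
    · exact isClopen_empty
  have hm'clopen : ∀ c : ℤ, IsClopen {y : Ω | m' y = c} := by
    intro c
    have hgset : IsClopen {y : Ω | ((gS y : ℤ) - 1) = c} := by
      by_cases hc : 0 ≤ c + 1
      · have hset : {y : Ω | ((gS y : ℤ) - 1) = c} = {y : Ω | gS y = (c+1).toNat} := by
          ext y; simp only [Set.mem_setOf_eq]; omega
        rw [hset]; exact hgSclopen _
      · have hset : {y : Ω | ((gS y : ℤ) - 1) = c} = ∅ := by
          ext y; simp only [Set.mem_setOf_eq, Set.mem_empty_iff_false, iff_false]; omega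
        rw [hset]; exact isClopen_empty
    have hset : {y : Ω | m' y = c}
        = (Sᶜ ∩ (if c = -1 then Set.univ else ∅)) ∪ (S ∩ {y : Ω | ((gS y : ℤ) - 1) = c}) := by
      ext y
      simp only [Set.mem_setOf_eq, Set.mem_union, Set.mem_inter_iff, Set.mem_compl_iff, hm']
      by_cases hy : y ∈ S
      · simp [hy]
      · by_cases hc : c = -1 <;> simp [hy, hc] <;> omega
    rw [hset]
    refine IsClopen.union (IsClopen.inter hS.compl ?_) (IsClopen.inter hS hgset)
    split
    · exact isClopen_univ
    · exact isClopen_empty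
  have hlocconst : ∀ (f : Ω → ℤ), (∀ c : ℤ, IsClopen {x : Ω | f x = c}) →
      ∀ (x : Ω), ∀ᶠ z in nhds x, f z = f x := by
    intro f hf x
    exact Filter.eventually_of_mem ((hf (f x)).2.mem_nhds rfl) (fun z hz => hz)
  have hPcont : Continuous P₀ := by
    rw [continuous_iff_continuousAt]
    intro x
    have hev : ∀ᶠ z in nhds x, P₀ z = G T (m x) z := by
      refine (hlocconst m hmclopen x).mono (fun z hz => ?_)
      rw [hP₀]; simp only; rw [hz]
    exact ((continuous_G T (m x)).continuousAt).congr (hev.mono fun z hz => hz.symm)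
  have hQcont : Continuous Q₀ := by
    rw [continuous_iff_continuousAt]
    intro x
    have hev : ∀ᶠ z in nhds x, Q₀ z = G T (m' x) z := by
      refine (hlocconst m' hm'clopen x).mono (fun z hz => ?_)
      rw [hQ₀]; simp only; rw [hz]
    exact ((continuous_G T (m' x)).continuousAt).congr (hev.mono fun z hz => hz.symm)
  have hmCont : Continuous m := by
    rw [continuous_iff_continuousAt]
    intro x
    exact Filter.Tendsto.congr' ((hlocconst m hmclopen x).mono fun z hz => hz.symm)
      tendsto_const_nhds
  -- the homeomorphism
  refine ⟨⟨⟨P₀, Q₀, hleft, hright⟩, hPcont, hQcont⟩, ?_, ⟨m, hmCont, fun x => rfl⟩, ?_⟩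
  · -- finite order
    refine ⟨(B+1).factorial, Nat.one_le_iff_ne_zero.mpr (Nat.factorial_ne_zero _), ?_⟩
    have iterA : ∀ y ∈ S, ∀ j : ℕ, j < gS y → P₀^[j] y = G T (j:ℤ) y := by
      intro y hy j
      induction j with
      | zero => intro _; simp [G_zero]
      | succ j ih =>
          intro hj
          rw [Function.iterate_succ_apply', ih (by omega)]
          have hnot : G T 1 (G T (j:ℤ) y) ∉ S := by
            rw [← G_add]
            rw [show ((1:ℤ) + (j:ℤ)) = (((j+1:ℕ)):ℤ) by omega]
            exact hgSMin y (j+1) (by omega) (by omega)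
          rw [hP₀]; simp only [hm, if_neg hnot]
          rw [← G_add]; congr 1; omega
    have iterB : ∀ y ∈ S, P₀^[gS y] y = y := by
      intro y hy
      have h1 : gS y = (gS y - 1) + 1 := by have := hgS1 y; omega
      rw [h1, Function.iterate_succ_apply', iterA y hy (gS y - 1) (by omega)]
      have hcomb : G T 1 (G T ((gS y - 1:ℕ):ℤ) y) = G T ((gS y:ℕ):ℤ) y := by
        rw [← G_add]; congr 1; have := hgS1 y; omega
      have hin : G T 1 (G T ((gS y - 1 : ℕ):ℤ) y) ∈ S := by rw [hcomb]; exact hgSS y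
      rw [hP₀]; simp only [hm, if_pos hin]
      rw [hcomb, key2 y hy, ← G_add,
        show ((1 - ((gS y:ℕ):ℤ)) + ((gS y - 1:ℕ):ℤ)) = 0 by have := hgS1 y; omega, G_zero]
    have iterC : ∀ y ∈ S, ∀ k : ℕ, P₀^[k * gS y] y = y := by
      intro y hy k
      induction k with
      | zero => simp
      | succ k ih =>
          rw [show (k+1) * gS y = gS y + k * gS y by ring, Function.iterate_add_apply,
            ih, iterB y hy]
    intro x
    have hexα : ∀ z : Ω, ∃ s : ℕ, G T (-(s:ℤ)) z ∈ S := fun z => (hHB z).imp (fun s hs => hs.2)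
    set α := findF (fun s z => G T (-(s:ℤ)) z ∈ S) hexα with hα
    have hαS : G T (-(α x:ℤ)) x ∈ S := findF_spec _ hexα x
    have hαMin : ∀ s < α x, G T (-(s:ℤ)) x ∉ S := fun s hs => findF_min _ hexα x hs
    set y := G T (-(α x:ℤ)) x with hy
    have hxy : x = G T (α x : ℤ) y := (G_cancel T _ x).symm
    have hαlt : α x < gS y := by
      by_contra hcon
      push_neg at hcon
      have h1 : G T ((gS y:ℕ):ℤ) y ∈ S := hgSS y
      have h2 : G T (-(((α x - gS y:ℕ)):ℤ)) x ∈ S := by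
        rw [hy] at h1
        rw [show (-(((α x - gS y:ℕ)):ℤ)) = ((gS y:ℕ):ℤ) + -((α x:ℕ):ℤ) by
          have := hgS1 y; omega, G_add]
        exact h1
      exact hαMin (α x - gS y) (by have := hgS1 y; omega) h2
    have hxP : P₀^[α x] y = x := by rw [iterA y hαS (α x) hαlt, ← hxy]
    have hdvd : gS y ∣ (B+1).factorial := Nat.dvd_factorial (hgS1 y) (hgSLe y)
    show P₀^[(B+1).factorial] x = x
    have hNy : P₀^[(B+1).factorial] y = y := by
      rw [show (B+1).factorial = ((B+1).factorial / gS y) * gS y from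
        (Nat.div_mul_cancel hdvd).symm]
      exact iterC y hαS _
    rw [← hxP, ← Function.iterate_add_apply,
      show (B+1).factorial + α x = α x + (B+1).factorial by ring,
      Function.iterate_add_apply, hNy]
  · intro x hx
    have hx' : G T 1 x ∉ S := by rwa [G_one]
    show P₀ x = T x
    rw [hP₀]; simp only [hm, if_neg hx']
    exact G_one T x

end Stmt15Aux

open Stmt15Aux in
/-- **Periodic approximation in Cantor dynamics.** Let `T` be an aperiodic homeomorphism
of a Cantor set `Ω`. There is a sequence `(Pₙ)` of finite-order homeomorphisms belonging
to the topological full group `[[T]]` which converges to `T` in the uniform topology,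
i.e. pointwise eventually. -/
theorem stmt_15 {Ω : Type*} [TopologicalSpace Ω] [CompactSpace Ω]
    [TopologicalSpace.MetrizableSpace Ω] [TotallyDisconnectedSpace Ω] [PerfectSpace Ω]
    [Nonempty Ω]
    (T : Ω ≃ₜ Ω)
    (hT : ∀ x : Ω, ∀ n : ℕ, 1 ≤ n → (T : Ω → Ω)^[n] x ≠ x) :
    ∃ P : ℕ → (Ω ≃ₜ Ω),
      (∀ n, ∃ N : ℕ, 1 ≤ N ∧ ∀ x : Ω, ((P n : Ω → Ω))^[N] x = x) ∧
      (∀ n, ∃ m : Ω → ℤ, Continuous m ∧ ∀ x : Ω, (P n) x = (T.toEquiv ^ (m x)) x) ∧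
      (∀ x : Ω, ∃ N : ℕ, ∀ n ≥ N, (P n) x = T x) := by
  classical
  have hT' : ∀ {i : ℤ}, i ≠ 0 → ∀ y : Ω, G T i y ≠ y := fun hi y => G_ne T hT hi y
  -- recursive construction of the disjoint seams
  let Frec : (n : ℕ) → {F : Set Ω // IsClopen F ∧ Density T n F} := fun n =>
    Nat.rec ⟨∅, isClopen_empty, density_zero T⟩
      (fun k ih => ⟨ih.1 ∪ (stage T hT' k ih.1 ih.2.1 ih.2.2).choose,
        ih.2.1.union (stage T hT' k ih.1 ih.2.1 ih.2.2).choose_spec.1,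
        (stage T hT' k ih.1 ih.2.1 ih.2.2).choose_spec.2.2.2.2.2⟩) n
  let S : ℕ → Set Ω := fun k =>
    (stage T hT' k (Frec k).1 (Frec k).2.1 (Frec k).2.2).choose
  have hSspec : ∀ k, IsClopen (S k) ∧ (∀ x ∈ S k, x ∉ (Frec k).1) ∧
      Sep T (32^(k+1)) (S k) ∧ HitF T (17 * 32^(k+1)) (S k) ∧
      HitB T (17 * 32^(k+1)) (S k) ∧ Density T (k+1) ((Frec k).1 ∪ S k) := fun k =>
    (stage T hT' k (Frec k).1 (Frec k).2.1 (Frec k).2.2).choose_spec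
  have hFsucc : ∀ k, (Frec (k+1)).1 = (Frec k).1 ∪ S k := fun k => rfl
  have hSsub : ∀ m k, m < k → S m ⊆ (Frec k).1 := by
    intro m k hmk
    induction k with
    | zero => omega
    | succ k ih =>
        rw [hFsucc k]
        rcases Nat.lt_or_ge m k with h | h
        · exact (ih h).trans Set.subset_union_left
        · rw [show m = k by omega]
          exact Set.subset_union_right
  have hSdisj : ∀ m k, m < k → ∀ x ∈ S k, x ∉ S m :=
    fun m k hmk x hx hxm => (hSspec k).2.1 x hx (hSsub m k hmk hxm)
  -- the periodic approximations
  choose P hP using fun k =>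
    periodic_from_section T (S k) (hSspec k).1 (17 * 32^(k+1))
      (by have : 0 < 17 * 32^(k+1) := by positivity
          omega)
      (hSspec k).2.2.2.1 (hSspec k).2.2.2.2.1
  refine ⟨P, fun n => (hP n).1, fun n => (hP n).2.1, ?_⟩
  intro x
  by_cases hx : ∃ k, T x ∈ S k
  · obtain ⟨k, hk⟩ := hx
    refine ⟨k+1, fun n hn => ?_⟩
    refine (hP n).2.2 x (fun hmem => ?_)
    exact hSdisj k n (by omega) (T x) hmem hk
  · push_neg at hx
    exact ⟨0, fun n _ => (hP n).2.2 x (hx n)⟩
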